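/- For every finite connected simple graph G there exists an assignment of positive integer weights to the edges of G such that the resulting weighted graph is simultaneously geodetic and antipodal: for every pair of vertices there is exactly one path of minimum total weight between them, and every vertex has exactly one vertex at maximum weighted distance from it. -/

import Mathlib

open SimpleGraph

/-- The *length* of a walk in a graph whose edges carry weights `w`:
the sum of the weights of its edges. -/
def wLength {V : Type*} {G : SimpleGraph V} (w : Sym2 V → ℕ) {u v : V} (p : G.Walk u v) : ℕ :=
  (p.edges.map w).sum

/-- The weighted distance between two vertices: the minimum weighted length of a path
between them. -/
noncomputable def wDist {V : Type*} (G : SimpleGraph V) (w : Sym2 V → ℕ) (u v : V) : ℕ :=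
  sInf {n : ℕ | ∃ p : G.Walk u v, p.IsPath ∧ wLength w p = n}

/-- Two nodup lists of naturals with equal sums of `2 ^ ·` have the same members. -/
lemma list_two_pow_sum_eq {l₁ l₂ : List ℕ} (h₁ : l₁.Nodup) (h₂ : l₂.Nodup)
    (h : (l₁.map (2 ^ ·)).sum = (l₂.map (2 ^ ·)).sum) : ∀ x, x ∈ l₁ ↔ x ∈ l₂ := by
  have e₁ : (l₁.map (2 ^ ·)).sum = ∑ i ∈ l₁.toFinset, 2 ^ i := (List.sum_toFinset _ h₁).symm
  have e₂ : (l₂.map (2 ^ ·)).sum = ∑ i ∈ l₂.toFinset, 2 ^ i := (List.sum_toFinset _ h₂).symm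
  have key : l₁.toFinset = l₂.toFinset :=
    Finset.geomSum_injective (le_refl 2) (by simp only; rw [← e₁, ← e₂, h])
  intro x
  rw [← List.mem_toFinset, ← List.mem_toFinset, key]

/-- Two paths from a common vertex with the same edge sets are equal (and have the same
endpoint). -/
lemma walk_eq_of_edges_eq {V : Type*} {G : SimpleGraph V} :
    ∀ {u v v' : V} (p : G.Walk u v) (q : G.Walk u v'), p.IsPath → q.IsPath →
      (∀ e, e ∈ p.edges ↔ e ∈ q.edges) → ∃ hv : v' = v, p = q.copy rfl hv := by
  intro u v v' p
  induction p with
  | nil =>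
    intro q hp hq h
    cases q with
    | nil => exact ⟨rfl, rfl⟩
    | cons hb q' =>
      exfalso
      have := (h _).mpr (List.mem_cons_self)
      simp at this
  | @cons u a v ha p' ih =>
    intro q hp hq h
    cases q with
    | nil =>
      exfalso
      have := (h _).mp (List.mem_cons_self)
      simp at this
    | @cons _ b _ hb q' =>
      rw [Walk.cons_isPath_iff] at hp hq
      have hba : b = a := by
        have hmem : s(u, b) ∈ (Walk.cons ha p').edges := (h _).mpr (List.mem_cons_self)
        rw [Walk.edges_cons, List.mem_cons] at hmem
        rcases hmem with hmem | hmem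
        · exact Sym2.congr_right.mp hmem
        · exact absurd (Walk.fst_mem_support_of_mem_edges _ hmem) hp.2
      subst hba
      have hnp : s(u, b) ∉ p'.edges := fun hh => hp.2 (Walk.fst_mem_support_of_mem_edges _ hh)
      have hnq : s(u, b) ∉ q'.edges := fun hh => hq.2 (Walk.fst_mem_support_of_mem_edges _ hh)
      have h' : ∀ e, e ∈ p'.edges ↔ e ∈ q'.edges := by
        intro e
        constructor
        · intro he
          have := (h e).mp (by simp [he])
          rw [Walk.edges_cons, List.mem_cons] at this
          rcases this with rfl | h2
          · exact absurd he hnp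
          · exact h2
        · intro he
          have := (h e).mpr (by simp [he])
          rw [Walk.edges_cons, List.mem_cons] at this
          rcases this with rfl | h2
          · exact absurd he hnq
          · exact h2
      obtain ⟨hv, hpq⟩ := ih q' hp.1 hq.1 h'
      subst hv
      rw [Walk.copy_rfl_rfl] at hpq
      exact ⟨rfl, by rw [Walk.copy_rfl_rfl, hpq]⟩

/-- Every finite connected graph admits an assignment of positive integer weights to its
edges making it simultaneously geodetic (between any two vertices there is exactly one path
of minimum total weight) and antipodal (every vertex has exactly one vertex at maximum
weighted distance from it). -/
theorem stmt_18 {V : Type*} [Fintype V] (G : SimpleGraph V) (hconn : G.Connected) :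
    ∃ w : Sym2 V → ℕ,
      (∀ e ∈ G.edgeSet, 0 < w e) ∧
      (∀ u v : V, ∃! p : G.Walk u v, p.IsPath ∧ wLength w p = wDist G w u v) ∧
      (∀ u : V, ∃! v : V, ∀ x : V, wDist G w u x ≤ wDist G w u v) := by
  classical
  obtain ⟨enc, henc⟩ : ∃ f : Sym2 V → ℕ, Function.Injective f :=
    Countable.exists_injective_nat (Sym2 V)
  set w : Sym2 V → ℕ := fun e => 2 ^ enc e with hw
  have key : ∀ {u v v' : V} (p : G.Walk u v) (q : G.Walk u v'), p.IsPath → q.IsPath →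
      wLength w p = wLength w q → ∃ hv : v' = v, p = q.copy rfl hv := by
    intro u v v' p q hp hq hlen
    apply walk_eq_of_edges_eq p q hp hq
    have h1 : (p.edges.map enc).Nodup := hp.edges_nodup.map henc
    have h2 : (q.edges.map enc).Nodup := hq.edges_nodup.map henc
    have hsum : ((p.edges.map enc).map (2 ^ ·)).sum = ((q.edges.map enc).map (2 ^ ·)).sum := by
      simpa [wLength, List.map_map, Function.comp_def, hw] using hlen
    have hmem := list_two_pow_sum_eq h1 h2 hsum
    intro e
    constructor
    · intro he
      obtain ⟨e', he', heq⟩ := List.mem_map.mp ((hmem (enc e)).mp (List.mem_map_of_mem he))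
      rwa [henc heq] at he'
    · intro he
      obtain ⟨e', he', heq⟩ := List.mem_map.mp ((hmem (enc e)).mpr (List.mem_map_of_mem he))
      rwa [henc heq] at he'
  have hach : ∀ u v : V, ∃ p : G.Walk u v, p.IsPath ∧ wLength w p = wDist G w u v := by
    intro u v
    have hne : {n : ℕ | ∃ p : G.Walk u v, p.IsPath ∧ wLength w p = n}.Nonempty := by
      obtain ⟨q⟩ := hconn u v
      exact ⟨_, q.bypass, q.bypass_isPath, rfl⟩
    exact Nat.sInf_mem hne
  refine ⟨w, ?_, ?_, ?_⟩
  · intro e _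
    exact Nat.two_pow_pos _
  · intro u v
    obtain ⟨p, hp, hlp⟩ := hach u v
    refine ⟨p, ⟨hp, hlp⟩, ?_⟩
    rintro q ⟨hq, hlq⟩
    obtain ⟨hv, hpq⟩ := key q p hq hp (hlq.trans hlp.symm)
    rw [hpq, Walk.copy_rfl_rfl]
  · intro u
    have inj : Function.Injective (fun x => wDist G w u x) := by
      intro x y hxy
      obtain ⟨p, hp, hlp⟩ := hach u x
      obtain ⟨q, hq, hlq⟩ := hach u y
      obtain ⟨hv, -⟩ := key p q hp hq (by rw [hlp, hlq]; exact hxy)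
      exact hv.symm
    obtain ⟨v, -, hv⟩ := Finset.exists_max_image Finset.univ
      (fun x => wDist G w u x) ⟨u, Finset.mem_univ u⟩
    refine ⟨v, fun x => hv x (Finset.mem_univ x), ?_⟩
    intro v' hv'
    exact inj (le_antisymm (hv v' (Finset.mem_univ v')) (hv' v))
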